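/- Consider the ORFM, and assume in addition that each G^{pi} has strictly positive derivative on (0,∞). At any point of Ω with all codon occupancies x^{pi}_j ∈ (0,1), z_E > 0, and z_p > 0 for all p, the Jacobian matrix of the ORFM vector field is Metzler with strictly negative diagonal: every off-diagonal entry is nonnegative and every diagonal entry is strictly negative. -/

import Mathlib

/-- State of an ORFM: codon occupancies `x p i j` (species `p`, strand `i`,
codon `j`, 1-based so that `j` ranges over `1,…,n p i`), translating-pool
occupancies `z p`, and the empty-ribosome pool occupancy `zE`.
(Only the coordinates with `p < M`, `i < s p`, `1 ≤ j ≤ n p i` are meaningful.) -/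
structure ORFMState where
  x : ℕ → ℕ → ℕ → ℝ
  z : ℕ → ℝ
  zE : ℝ

/-- The data of an Orthogonal Ribosomal Flow Model (ORFM): `M ≥ 1` ribosome
species, `s p` strands for species `p`, strand `(p,i)` of length `n p i ≥ 1`
with multiplicity `m p i ≥ 1` and positive rates `lam p i 0, …, lam p i (n p i)`,
an initiation function `G p i` (continuously differentiable on `[0,∞)`,
strictly increasing on `[0,∞)`, vanishing at `0`), and binding rates
`kp p > 0`, `km p > 0`. -/
structure ORFM where
  M : ℕ
  s : ℕ → ℕ
  n : ℕ → ℕ → ℕ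
  m : ℕ → ℕ → ℕ
  lam : ℕ → ℕ → ℕ → ℝ
  G : ℕ → ℕ → ℝ → ℝ
  kp : ℕ → ℝ
  km : ℕ → ℝ
  hM : 0 < M
  hn : ∀ p < M, ∀ i < s p, 1 ≤ n p i
  hm : ∀ p < M, ∀ i < s p, 1 ≤ m p i
  hlam : ∀ p < M, ∀ i < s p, ∀ j ≤ n p i, 0 < lam p i j
  hG_smooth : ∀ p < M, ∀ i < s p, ContDiffOn ℝ 1 (G p i) (Set.Ici 0)
  hG_mono : ∀ p < M, ∀ i < s p, StrictMonoOn (G p i) (Set.Ici 0)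
  hG_zero : ∀ p < M, ∀ i < s p, G p i 0 = 0
  hkp : ∀ p < M, 0 < kp p
  hkm : ∀ p < M, 0 < km p

/-- Ribosomal flux from codon `k` to codon `k+1` on strand `(p,i)`
(`k = 0` is initiation from the pool `z p`, `k = n p i` is termination). -/
noncomputable def ORFM.flow (S : ORFM) (st : ORFMState) (p i k : ℕ) : ℝ :=
  if k = 0 then S.lam p i 0 * S.G p i (st.z p) * (1 - st.x p i 1)
  else if k = S.n p i then S.lam p i k * st.x p i k
  else S.lam p i k * st.x p i k * (1 - st.x p i (k + 1))

/-- Component of the ORFM vector field for codon `j` (1-based) of strand `(p,i)`: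
`dx^{pi}_j/dt` = inflow minus outflow. -/
noncomputable def ORFM.fx (S : ORFM) (st : ORFMState) (p i j : ℕ) : ℝ :=
  S.flow st p i (j - 1) - S.flow st p i j

/-- Component of the ORFM vector field for the pool `z p`: `dz_p/dt`. -/
noncomputable def ORFM.fz (S : ORFM) (st : ORFMState) (p : ℕ) : ℝ :=
  S.kp p * st.zE - S.km p * st.z p
    + ∑ i ∈ Finset.range (S.s p), (S.m p i : ℝ) * S.flow st p i (S.n p i)
    - ∑ i ∈ Finset.range (S.s p), (S.m p i : ℝ) * S.flow st p i 0

/-- Component of the ORFM vector field for the empty pool: `dz_E/dt`. -/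
noncomputable def ORFM.fzE (S : ORFM) (st : ORFMState) : ℝ :=
  ∑ p ∈ Finset.range S.M, S.km p * st.z p - ∑ p ∈ Finset.range S.M, S.kp p * st.zE

/-- Membership in the state space `Ω`: all codon occupancies lie in `[0,1]`
and all pools are nonnegative. -/
def ORFM.inOmega (S : ORFM) (st : ORFMState) : Prop :=
  (∀ p < S.M, ∀ i < S.s p, ∀ j, 1 ≤ j → j ≤ S.n p i → st.x p i j ∈ Set.Icc (0:ℝ) 1)
    ∧ 0 ≤ st.zE ∧ ∀ p < S.M, 0 ≤ st.z p

/-- The total ribosome count `N_r(x,z)`. -/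
noncomputable def ORFM.NrOf (S : ORFM) (st : ORFMState) : ℝ :=
  st.zE + ∑ p ∈ Finset.range S.M, st.z p
    + ∑ p ∈ Finset.range S.M, ∑ i ∈ Finset.range (S.s p),
        (S.m p i : ℝ) * ∑ j ∈ Finset.Icc 1 (S.n p i), st.x p i j

/-- A steady state: every component of the ORFM vector field vanishes. -/
def ORFM.isSteady (S : ORFM) (st : ORFMState) : Prop :=
  (∀ p < S.M, ∀ i < S.s p, ∀ j, 1 ≤ j → j ≤ S.n p i → S.fx st p i j = 0)
    ∧ (∀ p < S.M, S.fz st p = 0) ∧ S.fzE st = 0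

/-- A (forward-time) solution of the ORFM: every meaningful coordinate is
differentiable in time with derivative given by the corresponding component
of the ORFM vector field, for all `t ≥ 0`. -/
def ORFM.isSolution (S : ORFM) (traj : ℝ → ORFMState) : Prop :=
  (∀ t, 0 ≤ t → ∀ p < S.M, ∀ i < S.s p, ∀ j, 1 ≤ j → j ≤ S.n p i →
      HasDerivAt (fun τ => (traj τ).x p i j) (S.fx (traj t) p i j) t)
    ∧ (∀ t, 0 ≤ t → ∀ p < S.M,
        HasDerivAt (fun τ => (traj τ).z p) (S.fz (traj t) p) t)
    ∧ ∀ t, 0 ≤ t → HasDerivAt (fun τ => (traj τ).zE) (S.fzE (traj t)) t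

/-- An index for a coordinate of the ORFM state. -/
inductive Coord where
  | codon (p i j : ℕ)
  | pool (p : ℕ)
  | poolE
  deriving DecidableEq

/-- The meaningful coordinates of the ORFM `S`. -/
def ORFM.relevant (S : ORFM) : Coord → Prop
  | .codon p i j => p < S.M ∧ i < S.s p ∧ 1 ≤ j ∧ j ≤ S.n p i
  | .pool p => p < S.M
  | .poolE => True

/-- The component of the ORFM vector field corresponding to a coordinate. -/
noncomputable def ORFM.component (S : ORFM) (st : ORFMState) : Coord → ℝ
  | .codon p i j => S.fx st p i j
  | .pool p => S.fz st p
  | .poolE => S.fzE st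

/-- Replace the value of one coordinate of a state. -/
def ORFMState.upd (st : ORFMState) : Coord → ℝ → ORFMState
  | .codon p i j, v =>
      { st with x := fun p' i' j' =>
          if p' = p ∧ i' = i ∧ j' = j then v else st.x p' i' j' }
  | .pool p, v => { st with z := Function.update st.z p v }
  | .poolE, v => { st with zE := v }

/-- Read the value of one coordinate of a state. -/
def ORFMState.read (st : ORFMState) : Coord → ℝ
  | .codon p i j => st.x p i j
  | .pool p => st.z p
  | .poolE => st.zE

set_option maxHeartbeats 3200000 in
/-- Assume moreover that each `G^{pi}` has strictly positive
derivative on `(0,∞)`. At any point of `Ω` with all codon occupancies in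
`(0,1)` and all pools strictly positive, the Jacobian `J` of the ORFM vector
field (any matrix of partial derivatives, expressed through `HasDerivAt`) is
Metzler with strictly negative diagonal: all off-diagonal entries over the
meaningful coordinates are nonnegative and all diagonal entries are strictly
negative. -/
theorem orfm_jacobian_metzler (S : ORFM)
    (hG' : ∀ p < S.M, ∀ i < S.s p, ∀ v : ℝ, 0 < v → 0 < deriv (S.G p i) v)
    (st : ORFMState)
    (hx : ∀ p < S.M, ∀ i < S.s p, ∀ j, 1 ≤ j → j ≤ S.n p i →
        st.x p i j ∈ Set.Ioo (0:ℝ) 1)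
    (hzE : 0 < st.zE) (hz : ∀ p < S.M, 0 < st.z p)
    (J : Coord → Coord → ℝ)
    (hJ : ∀ c₁ c₂, S.relevant c₁ → S.relevant c₂ →
        HasDerivAt (fun v => S.component (st.upd c₂ v) c₁) (J c₁ c₂) (st.read c₂)) :
    (∀ c₁ c₂, S.relevant c₁ → S.relevant c₂ → c₁ ≠ c₂ → 0 ≤ J c₁ c₂)
      ∧ ∀ c, S.relevant c → J c c < 0 := by
  have hGpos : ∀ p, p < S.M → ∀ i, i < S.s p → 0 < S.G p i (st.z p) := by
    intro p hp i hi
    have h0 := S.hG_zero p hp i hi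
    have h := S.hG_mono p hp i hi Set.self_mem_Ici (Set.mem_Ici.mpr (hz p hp).le) (hz p hp)
    linarith
  have hGder : ∀ p, p < S.M → ∀ i, i < S.s p →
      HasDerivAt (S.G p i) (deriv (S.G p i) (st.z p)) (st.z p) := by
    intro p hp i hi
    have hmem : Set.Ici (0:ℝ) ∈ nhds (st.z p) :=
      Filter.mem_of_superset (Ioi_mem_nhds (hz p hp)) Set.Ioi_subset_Ici_self
    exact (((S.hG_smooth p hp i hi).differentiableOn one_ne_zero).differentiableAt hmem).hasDerivAt
  have hG'pos : ∀ p, p < S.M → ∀ i, i < S.s p → 0 < deriv (S.G p i) (st.z p) :=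
    fun p hp i hi => hG' p hp i hi _ (hz p hp)
  have hJval : ∀ c₁ c₂, S.relevant c₁ → S.relevant c₂ → ∀ D : ℝ,
      HasDerivAt (fun v => S.component (st.upd c₂ v) c₁) D (st.read c₂) → J c₁ c₂ = D :=
    fun c₁ c₂ h₁ h₂ D hD => (hJ c₁ c₂ h₁ h₂).unique hD
  have hJconst : ∀ c₁ c₂, S.relevant c₁ → S.relevant c₂ →
      (∀ v, S.component (st.upd c₂ v) c₁ = S.component st c₁) → J c₁ c₂ = 0 :=
    fun c₁ c₂ h₁ h₂ hc => hJval c₁ c₂ h₁ h₂ 0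
      ((hasDerivAt_const _ _).congr_of_eventuallyEq (Filter.Eventually.of_forall hc))
  constructor
  · intro c₁ c₂ h₁ h₂ hne
    cases c₁ with
    | codon p i j =>
      obtain ⟨hp, hi, hj1, hjn⟩ := h₁
      have hnn := S.hn p hp i hi
      have hxj := hx p hp i hi j hj1 hjn
      cases c₂ with
      | codon q r l =>
        obtain ⟨hq, hr, hl1, hln⟩ := h₂
        by_cases hpq : p = q ∧ i = r
        · obtain ⟨rfl, rfl⟩ := hpq
          rcases (show l + 1 = j ∨ l = j ∨ l = j + 1 ∨ (l + 1 < j ∨ j + 1 < l) from by omega)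
            with hlj | hlj | hlj | hfar
          · subst hlj
            have hl0 : ¬(l = 0) := by omega
            have hlnn : ¬(l = S.n p i) := by omega
            have hll : ¬(l + 1 = l) := by omega
            have hlam := S.hlam p hp i hi l (by omega)
            by_cases hbn : l + 1 = S.n p i
            · have hval := hJval (Coord.codon p i (l+1)) (Coord.codon p i l)
                ⟨hp, hi, hj1, hjn⟩ ⟨hp, hi, hl1, hln⟩ _
                (((((hasDerivAt_id (st.x p i l)).const_mul (S.lam p i l)).mul_const
                    (1 - st.x p i (l+1))).sub_const
                    (S.lam p i (l+1) * st.x p i (l+1))).congr_of_eventuallyEq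
                  (Filter.Eventually.of_forall (fun v => by
                    simp only [ORFM.component, ORFM.fx, ORFM.flow, ORFMState.upd, id_eq]
                    simp [hl0, hlnn, hll, eq_true hbn])))
              rw [hval]
              nlinarith [mul_pos hlam (sub_pos.mpr hxj.2)]
            · have hll2 : ¬(l + 1 + 1 = l) := by omega
              have hval := hJval (Coord.codon p i (l+1)) (Coord.codon p i l)
                ⟨hp, hi, hj1, hjn⟩ ⟨hp, hi, hl1, hln⟩ _
                (((((hasDerivAt_id (st.x p i l)).const_mul (S.lam p i l)).mul_const
                    (1 - st.x p i (l+1))).sub_const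
                    (S.lam p i (l+1) * st.x p i (l+1) * (1 - st.x p i (l+1+1)))).congr_of_eventuallyEq
                  (Filter.Eventually.of_forall (fun v => by
                    simp only [ORFM.component, ORFM.fx, ORFM.flow, ORFMState.upd, id_eq]
                    simp [hl0, hlnn, hll, hbn, hll2])))
              rw [hval]
              nlinarith [mul_pos hlam (sub_pos.mpr hxj.2)]
          · subst hlj
            exact absurd rfl hne
          · subst hlj
            have hjltn : j + 1 ≤ S.n p i := hln
            by_cases hjone : j = 1
            · subst hjone
              have h1n : ¬(1 = S.n p i) := by omega
              have hlam := S.hlam p hp i hi 1 (by omega)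
              have hval := hJval (Coord.codon p i 1) (Coord.codon p i (1+1))
                ⟨hp, hi, hj1, hjn⟩ ⟨hp, hi, hl1, hln⟩ _
                (((hasDerivAt_const (st.x p i (1+1))
                    (S.lam p i 0 * S.G p i (st.z p) * (1 - st.x p i 1))).sub
                    (((hasDerivAt_id (st.x p i (1+1))).const_sub 1).const_mul
                      (S.lam p i 1 * st.x p i 1))).congr_of_eventuallyEq
                  (Filter.Eventually.of_forall (fun v => by
                    simp only [ORFM.component, ORFM.fx, ORFM.flow, ORFMState.upd, id_eq]
                    simp [h1n])))
              rw [hval]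
              nlinarith [mul_pos hlam hxj.1]
            · have hj0 : ¬(j - 1 = 0) := by omega
              have hjz : ¬(j = 0) := by omega
              have hj11 : j - 1 + 1 = j := by omega
              have hjn1 : ¬(j - 1 = S.n p i) := by omega
              have hjl : ¬(j - 1 = j + 1) := by omega
              have hjj : ¬(j = j + 1) := by omega
              have hjne : ¬(j = S.n p i) := by omega
              have hlam := S.hlam p hp i hi j (by omega)
              have hval := hJval (Coord.codon p i j) (Coord.codon p i (j+1))
                ⟨hp, hi, hj1, hjn⟩ ⟨hp, hi, hl1, hln⟩ _
                (((hasDerivAt_const (st.x p i (j+1))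
                    (S.lam p i (j-1) * st.x p i (j-1) * (1 - st.x p i j))).sub
                    (((hasDerivAt_id (st.x p i (j+1))).const_sub 1).const_mul
                      (S.lam p i j * st.x p i j))).congr_of_eventuallyEq
                  (Filter.Eventually.of_forall (fun v => by
                    simp only [ORFM.component, ORFM.fx, ORFM.flow, ORFMState.upd, id_eq]
                    simp [hj0, hjz, hj11, hjn1, hjl, hjj, hjne])))
              rw [hval]
              nlinarith [mul_pos hlam hxj.1]
          · have hzero : J (Coord.codon p i j) (Coord.codon p i l) = 0 := by
              apply hJconst (Coord.codon p i j) (Coord.codon p i l) ⟨hp, hi, hj1, hjn⟩ ⟨hp, hi, hl1, hln⟩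
              intro v
              by_cases hjone : j = 1
              · subst hjone
                have h1l : ¬(1 = l) := by omega
                have h2l : ¬(2 = l) := by omega
                simp only [ORFM.component, ORFM.fx, ORFM.flow, ORFMState.upd, id_eq]
                simp [h1l, h2l]
              · have hj0 : ¬(j - 1 = 0) := by omega
                have hjz : ¬(j = 0) := by omega
                have hj11 : j - 1 + 1 = j := by omega
                have hj1l : ¬(j - 1 = l) := by omega
                have hjl : ¬(j = l) := by omega
                have hj1l' : ¬(j + 1 = l) := by omega
                simp only [ORFM.component, ORFM.fx, ORFM.flow, ORFMState.upd, id_eq]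
                simp [hj0, hjz, hj11, hj1l, hjl, hj1l']
            rw [hzero]
        · have hc : ∀ X : ℕ, ¬(p = q ∧ i = r ∧ X = l) := fun X h => hpq ⟨h.1, h.2.1⟩
          have hzero : J (Coord.codon p i j) (Coord.codon q r l) = 0 := by
            apply hJconst (Coord.codon p i j) (Coord.codon q r l) ⟨hp, hi, hj1, hjn⟩ ⟨hq, hr, hl1, hln⟩
            intro v
            simp only [ORFM.component, ORFM.fx, ORFM.flow, ORFMState.upd, id_eq]
            simp [hc]
          rw [hzero]
      | pool q =>
        by_cases hpq : p = q
        · obtain rfl := hpq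
          by_cases hjone : j = 1
          · subst hjone
            have hlam0 := S.hlam p hp i hi 0 (by omega)
            by_cases h1n : 1 = S.n p i
            · have hval := hJval (Coord.codon p i 1) (Coord.pool p)
                ⟨hp, hi, hj1, hjn⟩ h₂ _
                ((((hGder p hp i hi).const_mul (S.lam p i 0)).mul_const
                    (1 - st.x p i 1)).sub_const (S.lam p i 1 * st.x p i 1)
                  |>.congr_of_eventuallyEq (Filter.Eventually.of_forall (fun v => by
                    simp only [ORFM.component, ORFM.fx, ORFM.flow, ORFMState.upd, id_eq]
                    simp [eq_true h1n, Function.update_self])))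
              rw [hval]
              nlinarith [mul_pos (mul_pos hlam0 (hG'pos p hp i hi)) (sub_pos.mpr hxj.2)]
            · have hval := hJval (Coord.codon p i 1) (Coord.pool p)
                ⟨hp, hi, hj1, hjn⟩ h₂ _
                ((((hGder p hp i hi).const_mul (S.lam p i 0)).mul_const
                    (1 - st.x p i 1)).sub_const
                    (S.lam p i 1 * st.x p i 1 * (1 - st.x p i 2))
                  |>.congr_of_eventuallyEq (Filter.Eventually.of_forall (fun v => by
                    simp only [ORFM.component, ORFM.fx, ORFM.flow, ORFMState.upd, id_eq]
                    simp [h1n, Function.update_self])))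
              rw [hval]
              nlinarith [mul_pos (mul_pos hlam0 (hG'pos p hp i hi)) (sub_pos.mpr hxj.2)]
          · have hj0 : ¬(j - 1 = 0) := by omega
            have hjz : ¬(j = 0) := by omega
            have hzero : J (Coord.codon p i j) (Coord.pool p) = 0 := by
              apply hJconst (Coord.codon p i j) (Coord.pool p) ⟨hp, hi, hj1, hjn⟩ h₂
              intro v
              simp only [ORFM.component, ORFM.fx, ORFM.flow, ORFMState.upd, id_eq]
              simp [hj0, hjz]
            rw [hzero]
        · have hzero : J (Coord.codon p i j) (Coord.pool q) = 0 := by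
            apply hJconst (Coord.codon p i j) (Coord.pool q) ⟨hp, hi, hj1, hjn⟩ h₂
            intro v
            simp only [ORFM.component, ORFM.fx, ORFM.flow, ORFMState.upd, id_eq]
            simp [Function.update_of_ne (show p ≠ q from hpq)]
          rw [hzero]
      | poolE =>
        have hzero : J (Coord.codon p i j) Coord.poolE = 0 := by
          apply hJconst (Coord.codon p i j) Coord.poolE ⟨hp, hi, hj1, hjn⟩ trivial
          intro v
          simp only [ORFM.component, ORFM.fx, ORFM.flow, ORFMState.upd, id_eq]
        rw [hzero]
    | pool p =>
      have hp : p < S.M := h₁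
      cases c₂ with
      | codon q r l =>
        obtain ⟨hq, hr, hl1, hln⟩ := h₂
        by_cases hpq : p = q
        · obtain rfl := hpq
          have h1 : ∀ i' ∈ Finset.range (S.s p), HasDerivAt
              (fun v => (S.m p i' : ℝ) * S.flow (st.upd (Coord.codon p r l) v) p i' (S.n p i'))
              (if i' = r ∧ S.n p i' = l then (S.m p i' : ℝ) * (S.lam p i' (S.n p i') * 1) else 0)
              (st.read (Coord.codon p r l)) := by
            intro i' hi'
            have hi'' := Finset.mem_range.mp hi'
            have hn0 : ¬(S.n p i' = 0) := by have := S.hn p hp i' hi''; omega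
            by_cases hcnd : i' = r ∧ S.n p i' = l
            · obtain ⟨rfl, hnl⟩ := hcnd
              rw [if_pos ⟨rfl, hnl⟩]
              exact (((hasDerivAt_id _).const_mul (S.lam p i' (S.n p i'))).const_mul
                  ((S.m p i' : ℝ))).congr_of_eventuallyEq
                (Filter.Eventually.of_forall (fun v => by
                  simp only [ORFM.flow, ORFMState.upd, id_eq]
                  simp [hn0, eq_true hnl]))
            · rw [if_neg hcnd]
              exact (hasDerivAt_const _
                  ((S.m p i' : ℝ) * S.flow st p i' (S.n p i'))).congr_of_eventuallyEq
                (Filter.Eventually.of_forall (fun v => by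
                  simp only [ORFM.flow, ORFMState.upd, id_eq]
                  simp [hn0, hcnd]))
          have h2 : ∀ i' ∈ Finset.range (S.s p), HasDerivAt
              (fun v => (S.m p i' : ℝ) * S.flow (st.upd (Coord.codon p r l) v) p i' 0)
              (if i' = r ∧ 1 = l then
                (S.m p i' : ℝ) * (S.lam p i' 0 * S.G p i' (st.z p) * -1) else 0)
              (st.read (Coord.codon p r l)) := by
            intro i' hi'
            by_cases hcnd : i' = r ∧ 1 = l
            · obtain ⟨rfl, h1l⟩ := hcnd
              rw [if_pos ⟨rfl, h1l⟩]
              exact ((((hasDerivAt_id _).const_sub 1).const_mul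
                  (S.lam p i' 0 * S.G p i' (st.z p))).const_mul
                  ((S.m p i' : ℝ))).congr_of_eventuallyEq
                (Filter.Eventually.of_forall (fun v => by
                  simp only [ORFM.flow, ORFMState.upd, id_eq]
                  simp [eq_true h1l]))
            · rw [if_neg hcnd]
              exact (hasDerivAt_const _
                  ((S.m p i' : ℝ) * S.flow st p i' 0)).congr_of_eventuallyEq
                (Filter.Eventually.of_forall (fun v => by
                  simp only [ORFM.flow, ORFMState.upd, id_eq]
                  simp [hcnd]))
          have hval := hJval (Coord.pool p) (Coord.codon p r l) h₁ ⟨hq, hr, hl1, hln⟩ _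
            ((((hasDerivAt_const (st.read (Coord.codon p r l))
                (S.kp p * st.zE - S.km p * st.z p)).add
                (HasDerivAt.fun_sum h1)).sub (HasDerivAt.fun_sum h2)).congr_of_eventuallyEq
              (Filter.Eventually.of_forall (fun v => by
                simp only [ORFM.component, ORFM.fz, ORFMState.upd, id_eq, Pi.add_apply, Pi.sub_apply])))
          rw [hval]
          have hs1 : 0 ≤ ∑ i' ∈ Finset.range (S.s p),
              (if i' = r ∧ S.n p i' = l then (S.m p i' : ℝ) * (S.lam p i' (S.n p i') * 1) else 0) := by
            apply Finset.sum_nonneg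
            intro i' hi'
            have hi'' := Finset.mem_range.mp hi'
            split
            · have := S.hlam p hp i' hi'' (S.n p i') le_rfl
              have hm : (0:ℝ) ≤ (S.m p i' : ℝ) := Nat.cast_nonneg _
              nlinarith [mul_nonneg hm this.le]
            · exact le_rfl
          have hs2 : ∑ i' ∈ Finset.range (S.s p),
              (if i' = r ∧ 1 = l then
                (S.m p i' : ℝ) * (S.lam p i' 0 * S.G p i' (st.z p) * -1) else 0) ≤ 0 := by
            apply Finset.sum_nonpos
            intro i' hi'
            have hi'' := Finset.mem_range.mp hi'
            split
            · have hl := S.hlam p hp i' hi'' 0 (Nat.zero_le _)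
              have hg := hGpos p hp i' hi''
              have hm : (0:ℝ) ≤ (S.m p i' : ℝ) := Nat.cast_nonneg _
              nlinarith [mul_nonneg hm (mul_pos hl hg).le]
            · exact le_rfl
          linarith
        · have hc : ∀ i' X, ¬(p = q ∧ i' = r ∧ X = l) := fun i' X h => hpq h.1
          have hzero : J (Coord.pool p) (Coord.codon q r l) = 0 := by
            apply hJconst (Coord.pool p) (Coord.codon q r l) h₁ ⟨hq, hr, hl1, hln⟩
            intro v
            simp only [ORFM.component, ORFM.fz, ORFM.flow, ORFMState.upd, id_eq]
            simp [hc]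
          rw [hzero]
      | pool q =>
        have hpq : p ≠ q := fun h => hne (by rw [h])
        have hzero : J (Coord.pool p) (Coord.pool q) = 0 := by
          apply hJconst (Coord.pool p) (Coord.pool q) h₁ h₂
          intro v
          simp only [ORFM.component, ORFM.fz, ORFM.flow, ORFMState.upd, id_eq]
          simp [Function.update_of_ne hpq]
        rw [hzero]
      | poolE =>
        have hval := hJval (Coord.pool p) Coord.poolE h₁ trivial _
          ((((((hasDerivAt_id st.zE).const_mul (S.kp p)).sub_const
              (S.km p * st.z p)).add_const
              (∑ i' ∈ Finset.range (S.s p), (S.m p i' : ℝ) * S.flow st p i' (S.n p i'))).sub_const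
              (∑ i' ∈ Finset.range (S.s p), (S.m p i' : ℝ) * S.flow st p i' 0)).congr_of_eventuallyEq
            (Filter.Eventually.of_forall (fun v => by
              simp only [ORFM.component, ORFM.fz, ORFM.flow, ORFMState.upd, id_eq])))
        rw [hval]
        nlinarith [S.hkp p hp]
    | poolE =>
      cases c₂ with
      | codon q r l =>
        have hzero : J Coord.poolE (Coord.codon q r l) = 0 := by
          apply hJconst Coord.poolE (Coord.codon q r l) trivial h₂
          intro v
          simp only [ORFM.component, ORFM.fzE, ORFMState.upd, id_eq]
        rw [hzero]
      | pool q =>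
        have hq : q < S.M := h₂
        have h1 : ∀ p' ∈ Finset.range S.M, HasDerivAt
            (fun v => S.km p' * Function.update st.z q v p')
            (if p' = q then S.km p' * 1 else 0) (st.read (Coord.pool q)) := by
          intro p' _
          by_cases hpq : p' = q
          · subst hpq
            rw [if_pos rfl]
            exact ((hasDerivAt_id _).const_mul (S.km p')).congr_of_eventuallyEq
              (Filter.Eventually.of_forall (fun v => by simp [Function.update_self]))
          · rw [if_neg hpq]
            exact (hasDerivAt_const _ (S.km p' * st.z p')).congr_of_eventuallyEq
              (Filter.Eventually.of_forall (fun v => by simp [Function.update_of_ne hpq]))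
        have hval := hJval Coord.poolE (Coord.pool q) trivial h₂ _
          (((HasDerivAt.fun_sum h1).sub_const
              (∑ p' ∈ Finset.range S.M, S.kp p' * st.zE)).congr_of_eventuallyEq
            (Filter.Eventually.of_forall (fun v => by
              simp only [ORFM.component, ORFM.fzE, ORFMState.upd, id_eq])))
        rw [hval]
        apply Finset.sum_nonneg
        intro p' hp'
        split
        · nlinarith [S.hkm p' (Finset.mem_range.mp hp')]
        · exact le_rfl
      | poolE => exact absurd rfl hne
  · intro c hrel
    cases c with
    | codon p i j =>
      obtain ⟨hp, hi, hj1, hjn⟩ := hrel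
      have hnn := S.hn p hp i hi
      have hxj := hx p hp i hi j hj1 hjn
      by_cases hjone : j = 1
      · subst hjone
        have hlam0 := S.hlam p hp i hi 0 (by omega)
        have hlam1 := S.hlam p hp i hi 1 (by omega)
        have hg := hGpos p hp i hi
        by_cases h1n : 1 = S.n p i
        · have hval := hJval (Coord.codon p i 1) (Coord.codon p i 1)
            ⟨hp, hi, hj1, hjn⟩ ⟨hp, hi, hj1, hjn⟩ _
            (((((hasDerivAt_id (st.x p i 1)).const_sub 1).const_mul
                (S.lam p i 0 * S.G p i (st.z p))).sub
                ((hasDerivAt_id (st.x p i 1)).const_mul (S.lam p i 1))).congr_of_eventuallyEq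
              (Filter.Eventually.of_forall (fun v => by
                simp only [ORFM.component, ORFM.fx, ORFM.flow, ORFMState.upd, id_eq]
                simp [eq_true h1n])))
          rw [hval]
          nlinarith [mul_pos hlam0 hg]
        · have hx2 := hx p hp i hi 2 (by omega) (by omega)
          have hval := hJval (Coord.codon p i 1) (Coord.codon p i 1)
            ⟨hp, hi, hj1, hjn⟩ ⟨hp, hi, hj1, hjn⟩ _
            (((((hasDerivAt_id (st.x p i 1)).const_sub 1).const_mul
                (S.lam p i 0 * S.G p i (st.z p))).sub
                (((hasDerivAt_id (st.x p i 1)).const_mul (S.lam p i 1)).mul_const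
                  (1 - st.x p i 2))).congr_of_eventuallyEq
              (Filter.Eventually.of_forall (fun v => by
                simp only [ORFM.component, ORFM.fx, ORFM.flow, ORFMState.upd, id_eq]
                simp [h1n])))
          rw [hval]
          nlinarith [mul_pos hlam0 hg, mul_pos hlam1 (sub_pos.mpr hx2.2)]
      · have hj0 : ¬(j - 1 = 0) := by omega
        have hjz : ¬(j = 0) := by omega
        have hj11 : j - 1 + 1 = j := by omega
        have hjn1 : ¬(j - 1 = S.n p i) := by omega
        have hne1 : ¬(j - 1 = j) := by omega
        have hne2 : ¬(j + 1 = j) := by omega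
        have hlamj1 := S.hlam p hp i hi (j-1) (by omega)
        have hlamj := S.hlam p hp i hi j (by omega)
        have hxjm := hx p hp i hi (j-1) (by omega) (by omega)
        by_cases hjn' : j = S.n p i
        · have hval := hJval (Coord.codon p i j) (Coord.codon p i j)
            ⟨hp, hi, hj1, hjn⟩ ⟨hp, hi, hj1, hjn⟩ _
            (((((hasDerivAt_id (st.x p i j)).const_sub 1).const_mul
                (S.lam p i (j-1) * st.x p i (j-1))).sub
                ((hasDerivAt_id (st.x p i j)).const_mul (S.lam p i j))).congr_of_eventuallyEq
              (Filter.Eventually.of_forall (fun v => by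
                simp only [ORFM.component, ORFM.fx, ORFM.flow, ORFMState.upd, id_eq]
                simp [hj0, hjz, hj11, hjn1, hne1, hne2, eq_true hjn'])))
          rw [hval]
          nlinarith [mul_pos hlamj1 hxjm.1]
        · have hxjp := hx p hp i hi (j+1) (by omega) (by omega)
          have hval := hJval (Coord.codon p i j) (Coord.codon p i j)
            ⟨hp, hi, hj1, hjn⟩ ⟨hp, hi, hj1, hjn⟩ _
            (((((hasDerivAt_id (st.x p i j)).const_sub 1).const_mul
                (S.lam p i (j-1) * st.x p i (j-1))).sub
                (((hasDerivAt_id (st.x p i j)).const_mul (S.lam p i j)).mul_const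
                  (1 - st.x p i (j+1)))).congr_of_eventuallyEq
              (Filter.Eventually.of_forall (fun v => by
                simp only [ORFM.component, ORFM.fx, ORFM.flow, ORFMState.upd, id_eq]
                simp [hj0, hjz, hj11, hjn1, hne1, hne2, hjn'])))
          rw [hval]
          nlinarith [mul_pos hlamj1 hxjm.1, mul_pos hlamj (sub_pos.mpr hxjp.2)]
    | pool p =>
      have hp : p < S.M := hrel
      have h1 : ∀ i' ∈ Finset.range (S.s p), HasDerivAt
          (fun v => (S.m p i' : ℝ) * S.flow (st.upd (Coord.pool p) v) p i' (S.n p i'))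
          (0:ℝ) (st.read (Coord.pool p)) := by
        intro i' hi'
        have hi'' := Finset.mem_range.mp hi'
        have hn0 : ¬(S.n p i' = 0) := by have := S.hn p hp i' hi''; omega
        exact (hasDerivAt_const _
            ((S.m p i' : ℝ) * (S.lam p i' (S.n p i') * st.x p i' (S.n p i')))).congr_of_eventuallyEq
          (Filter.Eventually.of_forall (fun v => by
            simp only [ORFM.flow, ORFMState.upd, id_eq]
            simp [hn0]))
      have h2 : ∀ i' ∈ Finset.range (S.s p), HasDerivAt
          (fun v => (S.m p i' : ℝ) * S.flow (st.upd (Coord.pool p) v) p i' 0)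
          ((S.m p i' : ℝ) * (S.lam p i' 0 * deriv (S.G p i') (st.z p) * (1 - st.x p i' 1)))
          (st.read (Coord.pool p)) := by
        intro i' hi'
        have hi'' := Finset.mem_range.mp hi'
        exact ((((hGder p hp i' hi'').const_mul (S.lam p i' 0)).mul_const
            (1 - st.x p i' 1)).const_mul ((S.m p i' : ℝ))).congr_of_eventuallyEq
          (Filter.Eventually.of_forall (fun v => by
            simp only [ORFM.flow, ORFMState.upd, id_eq]
            simp [Function.update_self]))
      have hval := hJval (Coord.pool p) (Coord.pool p) hrel hrel _
        (((((hasDerivAt_const (st.read (Coord.pool p)) (S.kp p * st.zE)).sub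
            ((hasDerivAt_id _).const_mul (S.km p))).add (HasDerivAt.fun_sum h1)).sub
            (HasDerivAt.fun_sum h2)).congr_of_eventuallyEq
          (Filter.Eventually.of_forall (fun v => by
            simp only [ORFM.component, ORFM.fz, ORFMState.upd, id_eq, Function.update_self, Pi.add_apply, Pi.sub_apply])))
      rw [hval]
      have hs2 : 0 ≤ ∑ i' ∈ Finset.range (S.s p),
          (S.m p i' : ℝ) * (S.lam p i' 0 * deriv (S.G p i') (st.z p) * (1 - st.x p i' 1)) := by
        apply Finset.sum_nonneg
        intro i' hi'
        have hi'' := Finset.mem_range.mp hi'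
        have hl := S.hlam p hp i' hi'' 0 (Nat.zero_le _)
        have hg' := hG'pos p hp i' hi''
        have hx1 := hx p hp i' hi'' 1 le_rfl (S.hn p hp i' hi'')
        have hm : (0:ℝ) ≤ (S.m p i' : ℝ) := Nat.cast_nonneg _
        nlinarith [mul_nonneg hm (le_of_lt (mul_pos (mul_pos hl hg') (sub_pos.mpr hx1.2)))]
      have hkm := S.hkm p hp
      simp only [Finset.sum_const_zero]
      linarith
    | poolE =>
      have h1 : ∀ p' ∈ Finset.range S.M, HasDerivAt
          (fun v => S.kp p' * v) (S.kp p' * 1) st.zE :=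
        fun p' _ => (hasDerivAt_id _).const_mul _
      have hval := hJval Coord.poolE Coord.poolE trivial trivial _
        (((hasDerivAt_const st.zE (∑ p' ∈ Finset.range S.M, S.km p' * st.z p')).sub
          (HasDerivAt.fun_sum h1)).congr_of_eventuallyEq
          (Filter.Eventually.of_forall (fun v => by
            simp only [ORFM.component, ORFM.fzE, ORFMState.upd, id_eq, Pi.sub_apply])))
      rw [hval]
      have hpos : 0 < ∑ p' ∈ Finset.range S.M, S.kp p' * 1 :=
        Finset.sum_pos (fun p' hp' => by nlinarith [S.hkp p' (Finset.mem_range.mp hp')])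
          ⟨0, Finset.mem_range.mpr S.hM⟩
      linarith
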